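/- Let N ≥ 1, fix a > a_{q*}, and for 0 < q < q* near q* let u_q be a nonnegative minimizer of \tilde d_a(q). Then ∫_{ℝ^N}|∇u_q|²dx / ∫_{ℝ^N}|∇(u_q²)|²dx → 0 as q ↗ q*. -/

import Mathlib

open MeasureTheory Filter Topology Metric

noncomputable section

/-- Condition (V): `V` is a locally bounded nonnegative (measurable) potential with
`inf V = 0` and `V(x) → ∞` as `|x| → ∞`. -/
def CondV (N : ℕ) (V : EuclideanSpace ℝ (Fin N) → ℝ) : Prop :=
  Measurable V ∧ (∀ x, 0 ≤ V x) ∧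
  (∀ R : ℝ, ∃ C : ℝ, ∀ x : EuclideanSpace ℝ (Fin N), ‖x‖ ≤ R → V x ≤ C) ∧
  (∀ ε : ℝ, 0 < ε → ∃ x, V x < ε) ∧
  Tendsto V (cocompact (EuclideanSpace ℝ (Fin N))) atTop

/-- Membership in the space `H`. -/
def InH (N : ℕ) (V u : EuclideanSpace ℝ (Fin N) → ℝ) : Prop :=
  Differentiable ℝ u ∧ MemLp u 2 volume ∧
  Integrable (fun x => ‖fderiv ℝ u x‖ ^ 2 + V x * u x ^ 2)

/-- Membership in the space `X`. -/
def InX (N : ℕ) (V u : EuclideanSpace ℝ (Fin N) → ℝ) : Prop :=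
  InH N V u ∧ Integrable (fun x => ‖fderiv ℝ (fun y => u y ^ 2) x‖ ^ 2)

/-- The critical exponent `q* = 2 + 4/N`. -/
def qstar (N : ℕ) : ℝ := 2 + 4 / N

/-- The energy functional `E_q^a`. -/
def energy (N : ℕ) (V : EuclideanSpace ℝ (Fin N) → ℝ) (a q : ℝ)
    (u : EuclideanSpace ℝ (Fin N) → ℝ) : ℝ :=
  (1 / 2) * (∫ x, (‖fderiv ℝ u x‖ ^ 2 + V x * u x ^ 2))
    + (1 / 4) * (∫ x, ‖fderiv ℝ (fun y => u y ^ 2) x‖ ^ 2)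
    - (a / (q + 2)) * (∫ x, |u x| ^ (q + 2))

/-- `u` is a minimizer for `d_a(q)`. -/
def IsMinimizer (N : ℕ) (V : EuclideanSpace ℝ (Fin N) → ℝ) (a q : ℝ)
    (u : EuclideanSpace ℝ (Fin N) → ℝ) : Prop :=
  InX N V u ∧ (∫ x, u x ^ 2) = 1 ∧
  ∀ w, InX N V w → (∫ x, w x ^ 2) = 1 → energy N V a q u ≤ energy N V a q w

/-- `d_a(q)`, as the infimum of the energy over the constraint manifold. -/
def dval (N : ℕ) (V : EuclideanSpace ℝ (Fin N) → ℝ) (a q : ℝ) : ℝ :=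
  sInf {r : ℝ | ∃ u, InX N V u ∧ (∫ x, u x ^ 2) = 1 ∧ energy N V a q u = r}

/-- The pointwise Laplacian. -/
def lap (N : ℕ) (u : EuclideanSpace ℝ (Fin N) → ℝ) (x : EuclideanSpace ℝ (Fin N)) : ℝ :=
  ∑ i : Fin N, fderiv ℝ (fun y => fderiv ℝ u y (EuclideanSpace.single i 1)) x
    (EuclideanSpace.single i 1)

/-- `v` is the nonnegative radially symmetric (compactly supported) solution of
`-Δv + 1 = v^(q/2)`, i.e. a solution of the associated Dirichlet–Neumann free
boundary problem on a ball. -/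
def IsGroundState (N : ℕ) (q : ℝ) (v : EuclideanSpace ℝ (Fin N) → ℝ) : Prop :=
  (∀ x, 0 ≤ v x) ∧
  (∀ x y : EuclideanSpace ℝ (Fin N), ‖x‖ = ‖y‖ → v x = v y) ∧
  Integrable v ∧ ContDiff ℝ 1 v ∧
  ∃ R : ℝ, 0 < R ∧
    (∀ x : EuclideanSpace ℝ (Fin N), ‖x‖ < R → 0 < v x) ∧
    (∀ x : EuclideanSpace ℝ (Fin N), R ≤ ‖x‖ → v x = 0) ∧
    (∀ x : EuclideanSpace ℝ (Fin N), ‖x‖ = R → fderiv ℝ v x = 0) ∧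
    ContDiffOn ℝ 2 v (Metric.ball 0 R) ∧
    (∀ x : EuclideanSpace ℝ (Fin N), ‖x‖ < R → -lap N v x + 1 = v x ^ (q / 2))

/-- `θ_q`. -/
def thetaQ (N : ℕ) (q : ℝ) : ℝ := 2 * q * N / ((q + 2) * ((N : ℝ) + 2))

/-- `λ_q`. -/
def lambdaQ (N : ℕ) (q : ℝ) : ℝ :=
  (1 - thetaQ N q) * (thetaQ N q / (1 - thetaQ N q)) ^ (q * N / (2 * ((N : ℝ) + 2)))

/-- `a_q = ‖v_q‖_{L¹}^{q/(N+2)}`. -/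
def aQ (N : ℕ) (q : ℝ) (v : EuclideanSpace ℝ (Fin N) → ℝ) : ℝ :=
  (∫ x, |v x|) ^ (q / ((N : ℝ) + 2))

/-- `a_{q*} = ‖v_{q*}‖_{L¹}^{2/N}`. -/
def aStar (N : ℕ) (v : EuclideanSpace ℝ (Fin N) → ℝ) : ℝ :=
  (∫ x, |v x|) ^ ((2 : ℝ) / N)

/-- Membership in `H¹ ∩ {∇(u²) ∈ L²}` (for the potential-free problem). -/
def InXfree (N : ℕ) (u : EuclideanSpace ℝ (Fin N) → ℝ) : Prop :=
  Differentiable ℝ u ∧ MemLp u 2 volume ∧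
  Integrable (fun x => ‖fderiv ℝ u x‖ ^ 2) ∧
  Integrable (fun x => ‖fderiv ℝ (fun y => u y ^ 2) x‖ ^ 2)

/-- The potential-free energy functional `Ẽ_q^a`. -/
def energyFree (N : ℕ) (a q : ℝ) (u : EuclideanSpace ℝ (Fin N) → ℝ) : ℝ :=
  (1 / 2) * (∫ x, ‖fderiv ℝ u x‖ ^ 2)
    + (1 / 4) * (∫ x, ‖fderiv ℝ (fun y => u y ^ 2) x‖ ^ 2)
    - (a / (q + 2)) * (∫ x, |u x| ^ (q + 2))

/-- `u` is a minimizer for `d̃_a(q)`. -/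
def IsMinimizerFree (N : ℕ) (a q : ℝ) (u : EuclideanSpace ℝ (Fin N) → ℝ) : Prop :=
  InXfree N u ∧ (∫ x, u x ^ 2) = 1 ∧
  ∀ w, InXfree N w → (∫ x, w x ^ 2) = 1 → energyFree N a q u ≤ energyFree N a q w

/-- `d̃_a(q)`. -/
def dvalFree (N : ℕ) (a q : ℝ) : ℝ :=
  sInf {r : ℝ | ∃ u, InXfree N u ∧ (∫ x, u x ^ 2) = 1 ∧ energyFree N a q u = r}

/-- Membership in `D^{2,1}(ℝ^N)`. -/
def InD21 (N : ℕ) (u : EuclideanSpace ℝ (Fin N) → ℝ) : Prop :=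
  Differentiable ℝ u ∧ Integrable u ∧ Integrable (fun x => ‖fderiv ℝ u x‖ ^ 2)

/-- The auxiliary functional `F`. -/
def Ffun (N : ℕ) (astar : ℝ) (u : EuclideanSpace ℝ (Fin N) → ℝ) : ℝ :=
  (∫ x, ‖fderiv ℝ u x‖ ^ 2)
    - ((N : ℝ) * astar / ((N : ℝ) + 1)) * (∫ x, |u x| ^ ((2 : ℝ) + 2 / N))

/-- `u` is a minimizer of the auxiliary problem `m(c)`. -/
def IsMinF (N : ℕ) (astar c : ℝ) (u : EuclideanSpace ℝ (Fin N) → ℝ) : Prop :=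
  InD21 N u ∧ (∫ x, |u x|) = c ∧
  ∀ w, InD21 N w → (∫ x, |w x|) = c → Ffun N astar u ≤ Ffun N astar w

/-- `t_q`, the leading blow-up rate. -/
def tQ (N : ℕ) (a q : ℝ) (v : EuclideanSpace ℝ (Fin N) → ℝ) : ℝ :=
  (4 * a * q / (qstar N * lambdaQ N q * aQ N q v * (q + 2))) ^ (qstar N / (qstar N - q))

/-- `ε_q = t_q^{-1/(N+2)}`. -/
def epsQ (N : ℕ) (a q : ℝ) (v : EuclideanSpace ℝ (Fin N) → ℝ) : ℝ :=
  (4 * a * q / (qstar N * lambdaQ N q * aQ N q v * (q + 2))) ^ (-(2 / ((N : ℝ) * (qstar N - q))))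


lemma my_fderiv_scale {N : ℕ} {g : EuclideanSpace ℝ (Fin N) → ℝ}
    (hg : Differentiable ℝ g) (k c : ℝ) (x : EuclideanSpace ℝ (Fin N)) :
    fderiv ℝ (fun y => k * g (c • y)) x = (k * c) • fderiv ℝ g (c • x) := by
  have h1 : HasFDerivAt (fun y : EuclideanSpace ℝ (Fin N) => c • y)
      (c • ContinuousLinearMap.id ℝ (EuclideanSpace ℝ (Fin N))) x :=
    (hasFDerivAt_id x).const_smul c
  have h2 : HasFDerivAt (fun y => g (c • y))
      ((fderiv ℝ g (c • x)).comp (c • ContinuousLinearMap.id ℝ (EuclideanSpace ℝ (Fin N)))) x :=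
    (hg (c • x)).hasFDerivAt.comp x h1
  have h3 := h2.const_mul k
  rw [h3.fderiv]
  ext v
  simp [ContinuousLinearMap.smul_apply, _root_.map_smul, smul_eq_mul]
  ring

lemma my_integral_scale {N : ℕ} (g : EuclideanSpace ℝ (Fin N) → ℝ) {c : ℝ} (hc : 0 < c) :
    ∫ x, g (c • x) = (c ^ N)⁻¹ * ∫ x, g x := by
  have := MeasureTheory.Measure.integral_comp_smul_of_nonneg
    (volume : Measure (EuclideanSpace ℝ (Fin N))) g c (hR := hc.le)
  simpa [finrank_euclideanSpace_fin, smul_eq_mul] using this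

lemma my_energy_scale (N : ℕ) (a q : ℝ) (u : EuclideanSpace ℝ (Fin N) → ℝ)
    (hm : IsMinimizerFree N a q u) (s : ℝ) (hs : 0 < s) :
    energyFree N a q u ≤
      (1 / 2) * ((s ^ 2) ^ 2 * ∫ x, ‖fderiv ℝ u x‖ ^ 2)
        + (1 / 4) * ((s ^ 2) ^ (N + 2) * ∫ x, ‖fderiv ℝ (fun y => u y ^ 2) x‖ ^ 2)
        - (a / (q + 2)) * ((s ^ N : ℝ) ^ q * ∫ x, |u x| ^ (q + 2)) := by
  obtain ⟨⟨hdiff, hL2, hgrad, hgrad2⟩, hnorm, hmin⟩ := hm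
  set c : ℝ := s ^ 2 with hcdef
  have hc : 0 < c := by positivity
  have hcne : c ≠ 0 := hc.ne'
  set k : ℝ := s ^ N with hkdef
  have hk : 0 < k := by positivity
  have hck : c ^ N = k ^ 2 := by
    rw [hcdef, hkdef, ← pow_mul, ← pow_mul, mul_comm]
  set w : EuclideanSpace ℝ (Fin N) → ℝ := fun x => k * u (c • x) with hwdef
  have hdiff2 : Differentiable ℝ (fun y => u y ^ 2) := hdiff.pow 2
  have hwdiff : Differentiable ℝ w :=
    ((hdiff.comp (differentiable_id.const_smul c)).const_mul k)
  have hwfd : ∀ x, fderiv ℝ w x = (k * c) • fderiv ℝ u (c • x) :=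
    fun x => my_fderiv_scale hdiff k c x
  have hwsq : (fun y => w y ^ 2) = fun y => k ^ 2 * ((fun z => u z ^ 2) (c • y)) := by
    funext y; simp only [hwdef]; ring
  have hwfd2 : ∀ x, fderiv ℝ (fun y => w y ^ 2) x
      = (k ^ 2 * c) • fderiv ℝ (fun z => u z ^ 2) (c • x) := by
    intro x; rw [hwsq]; exact my_fderiv_scale hdiff2 (k ^ 2) c x
  -- pointwise norm identities
  have hnw : (fun x => ‖fderiv ℝ w x‖ ^ 2)
      = fun x => (k * c) ^ 2 * ((fun y => ‖fderiv ℝ u y‖ ^ 2) (c • x)) := by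
    funext x
    rw [hwfd x, norm_smul]
    simp [Real.norm_eq_abs, abs_of_pos (mul_pos hk hc), mul_pow]
  have hnw2 : (fun x => ‖fderiv ℝ (fun y => w y ^ 2) x‖ ^ 2)
      = fun x => (k ^ 2 * c) ^ 2
        * ((fun y => ‖fderiv ℝ (fun z => u z ^ 2) y‖ ^ 2) (c • x)) := by
    funext x
    rw [hwfd2 x, norm_smul]
    simp [Real.norm_eq_abs, abs_of_pos (mul_pos (pow_pos hk 2) hc), mul_pow]
  have habs : (fun x => |w x| ^ (q + 2))
      = fun x => k ^ (q + 2) * ((fun y => |u y| ^ (q + 2)) (c • x)) := by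
    funext x
    simp only [hwdef, abs_mul, abs_of_pos hk]
    rw [Real.mul_rpow hk.le (abs_nonneg _)]
  have hsqw : (fun x => w x ^ 2) = fun x => k ^ 2 * ((fun y => u y ^ 2) (c • x)) := hwsq
  -- integrals
  have hA : ∫ x, ‖fderiv ℝ w x‖ ^ 2 = (s ^ 2) ^ 2 * ∫ x, ‖fderiv ℝ u x‖ ^ 2 := by
    rw [hnw, integral_const_mul _ _, my_integral_scale (fun y => ‖fderiv ℝ u y‖ ^ 2) hc, ← mul_assoc]
    congr 1
    rw [hcdef, hkdef]
    field_simp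
    ring
  have hB : ∫ x, ‖fderiv ℝ (fun y => w y ^ 2) x‖ ^ 2
      = (s ^ 2) ^ (N + 2) * ∫ x, ‖fderiv ℝ (fun y => u y ^ 2) x‖ ^ 2 := by
    rw [hnw2, integral_const_mul _ _, my_integral_scale (fun y => ‖fderiv ℝ (fun z => u z ^ 2) y‖ ^ 2) hc, ← mul_assoc]
    congr 1
    rw [hcdef, hkdef]
    field_simp
    ring
  have hC : ∫ x, |w x| ^ (q + 2) = (s ^ N : ℝ) ^ q * ∫ x, |u x| ^ (q + 2) := by
    rw [habs, integral_const_mul _ _, my_integral_scale (fun y => |u y| ^ (q + 2)) hc, ← mul_assoc]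
    congr 1
    rw [hck, ← hkdef]
    rw [show (k : ℝ) ^ 2 = k ^ (2 : ℝ) by
      rw [← Real.rpow_natCast k 2]; norm_num]
    rw [← Real.rpow_neg hk.le, ← Real.rpow_add hk]
    norm_num
  have hU : ∫ x, w x ^ 2 = 1 := by
    rw [hsqw, integral_const_mul _ _, my_integral_scale (fun y => u y ^ 2) hc, hck, hnorm]
    field_simp
  -- membership
  have husq : Integrable (fun x => u x ^ 2) :=
    (memLp_two_iff_integrable_sq hdiff.continuous.aestronglyMeasurable).1 hL2
  have hwL2 : MemLp w 2 volume := by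
    refine (memLp_two_iff_integrable_sq hwdiff.continuous.aestronglyMeasurable).2 ?_
    rw [hsqw]
    exact (husq.comp_smul hcne).const_mul _
  have hwgrad : Integrable (fun x => ‖fderiv ℝ w x‖ ^ 2) := by
    rw [hnw]; exact (hgrad.comp_smul hcne).const_mul _
  have hwgrad2 : Integrable (fun x => ‖fderiv ℝ (fun y => w y ^ 2) x‖ ^ 2) := by
    rw [hnw2]; exact (hgrad2.comp_smul hcne).const_mul _
  have hle := hmin w ⟨hwdiff, hwL2, hwgrad, hwgrad2⟩ hU
  calc energyFree N a q u ≤ energyFree N a q w := hle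
    _ = _ := by rw [energyFree, hA, hB, hC]


/-- for fixed `a > a_{q*}` and nonnegative minimizers `u_q` of
`d̃_a(q)` (for `q` near `q*`), `∫|∇u_q|²/∫|∇(u_q²)|² → 0` as `q ↗ q*`. -/
theorem free_minimizers_gradient_ratio_vanishes
    (N : ℕ) (hN : 1 ≤ N)
    (v : ℝ → EuclideanSpace ℝ (Fin N) → ℝ) (hv : ∀ q ∈ Set.Ioo (0 : ℝ) (qstar N), IsGroundState N q (v q))
    (vstar : EuclideanSpace ℝ (Fin N) → ℝ) (hvstar : IsGroundState N (qstar N) vstar)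
    (a : ℝ) (ha : aStar N vstar < a)
    (u : ℝ → EuclideanSpace ℝ (Fin N) → ℝ)
    (hu : ∀ᶠ q in 𝓝[<] qstar N, (∀ x, 0 ≤ u q x) ∧ IsMinimizerFree N a q (u q)) :
    Tendsto (fun q => (∫ x, ‖fderiv ℝ (u q) x‖ ^ 2) /
      (∫ x, ‖fderiv ℝ (fun y => u q y ^ 2) x‖ ^ 2)) (𝓝[<] qstar N) (𝓝 0) := by
  have hNne : (N : ℝ) ≠ 0 := Nat.cast_ne_zero.mpr (by omega)
  set Q : ℝ := qstar N with hQdef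
  set b : ℝ := (2 : ℝ) ^ N with hbdef
  have hb1 : (1 : ℝ) < b := one_lt_pow₀ (by norm_num) (by omega)
  have hbne : b ≠ 0 := by positivity
  set P : ℝ := (4 : ℝ) ^ (N + 2) with hPdef
  have hP64 : (64 : ℝ) ≤ P := by
    calc (64 : ℝ) = 4 ^ 3 := by norm_num
    _ ≤ 4 ^ (N + 2) := pow_le_pow_right₀ (by norm_num) (by omega)
  have hPne : P ≠ 0 := by positivity
  have hNQ : (N : ℝ) * Q = ((2 * N + 4 : ℕ) : ℝ) := by
    rw [hQdef]; simp only [qstar]; push_cast; field_simp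
  have hbQ : b ^ Q = P := by
    rw [hbdef, ← Real.rpow_natCast (2 : ℝ) N,
      ← Real.rpow_mul (by norm_num : (0 : ℝ) ≤ 2), hNQ, Real.rpow_natCast, hPdef,
      show 2 * N + 4 = 2 * (N + 2) by ring, pow_mul]
    norm_num
  have hgcont : ContinuousAt (fun q : ℝ => b ^ q) Q :=
    Real.continuousAt_const_rpow hbne
  have hKlim : Tendsto (fun q : ℝ => (8 / 15) * (1 - P⁻¹) * (P - b ^ q) / (b ^ q - 16))
      (𝓝[<] Q) (𝓝 0) := by
    have hg : Tendsto (fun q : ℝ => b ^ q) (𝓝[<] Q) (𝓝 P) := by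
      have h := hgcont.tendsto
      rw [hbQ] at h
      exact h.mono_left nhdsWithin_le_nhds
    have h1 : Tendsto (fun q : ℝ => (8 / 15) * (1 - P⁻¹) * (P - b ^ q)) (𝓝[<] Q)
        (𝓝 ((8 / 15) * (1 - P⁻¹) * (P - P))) := tendsto_const_nhds.mul (tendsto_const_nhds.sub hg)
    have h2 : Tendsto (fun q : ℝ => b ^ q - 16) (𝓝[<] Q) (𝓝 (P - 16)) :=
      hg.sub tendsto_const_nhds
    have h3 := h1.div h2 (by linarith : P - 16 ≠ 0)
    simpa [Pi.div_def] using h3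
  have hev16 : ∀ᶠ q in 𝓝[<] Q, (16 : ℝ) < b ^ q := by
    apply eventually_nhdsWithin_of_eventually_nhds
    have h16Q : (16 : ℝ) < b ^ Q := by rw [hbQ]; linarith
    exact hgcont.eventually (eventually_gt_nhds h16Q)
  have hevlt : ∀ᶠ q in 𝓝[<] Q, q < Q := eventually_mem_nhdsWithin
  refine squeeze_zero' ?_ ?_ hKlim
  · exact Eventually.of_forall fun q =>
      div_nonneg (integral_nonneg fun x => by positivity) (integral_nonneg fun x => by positivity)
  · filter_upwards [hu, hev16, hevlt] with q hq h16 hqQ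
    obtain ⟨-, hmq⟩ := hq
    have h1 := my_energy_scale N a q (u q) hmq 2 (by norm_num)
    have h2 := my_energy_scale N a q (u q) hmq (1 / 2) (by norm_num)
    simp only [energyFree] at h1 h2
    set A : ℝ := ∫ x, ‖fderiv ℝ (u q) x‖ ^ 2 with hAdef
    set B : ℝ := ∫ x, ‖fderiv ℝ (fun y => u q y ^ 2) x‖ ^ 2 with hBdef
    set C : ℝ := ∫ x, |u q x| ^ (q + 2) with hCdef
    have hA0 : 0 ≤ A := integral_nonneg fun x => by positivity
    have hB0 : 0 ≤ B := integral_nonneg fun x => by positivity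
    set X : ℝ := b ^ q with hXdef
    have hXpos : (0 : ℝ) < X := by linarith
    have hXne : X ≠ 0 := hXpos.ne'
    have hXP : X ≤ P := by
      rw [hXdef, ← hbQ]
      exact Real.rpow_le_rpow_of_exponent_le hb1.le hqQ.le
    -- rewrite coefficients of the two scaled inequalities
    have e1 : (((2 : ℝ) ^ 2) ^ 2 : ℝ) = 16 := by norm_num
    have e2 : (((2 : ℝ) ^ 2) ^ (N + 2) : ℝ) = P := by rw [hPdef]; norm_num
    have e4 : (((1 / 2 : ℝ) ^ 2) ^ 2 : ℝ) = 1 / 16 := by norm_num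
    have e5 : (((1 / 2 : ℝ) ^ 2) ^ (N + 2) : ℝ) = P⁻¹ := by
      rw [hPdef, show ((1 / 2 : ℝ) ^ 2) = (4 : ℝ)⁻¹ by norm_num, inv_pow]
    have e6 : (((1 / 2 : ℝ) ^ N : ℝ)) ^ q = X⁻¹ := by
      rw [show ((1 / 2 : ℝ) ^ N) = ((2 : ℝ) ^ N)⁻¹ by rw [one_div, inv_pow],
        Real.inv_rpow (by positivity), hXdef, hbdef]
    rw [e1, e2] at h1
    rw [e4, e5, e6] at h2
    set D : ℝ := a / (q + 2) * C with hDdef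
    have hr1 : a / (q + 2) * (X * C) = X * D := by rw [hDdef]; ring
    have hr2 : a / (q + 2) * (X⁻¹ * C) = X⁻¹ * D := by rw [hDdef]; ring
    rw [hr1] at h1
    rw [hr2] at h2
    clear_value A B C X D
    clear hr1 hr2 hAdef hBdef hCdef hXdef hDdef
    -- derive the key inequality
    have hDlow : (15 / 32) * A + (1 / 4) * (1 - P⁻¹) * B ≤ (1 - X⁻¹) * D := by linarith [h2]
    have hDup : (X - 1) * D ≤ (15 / 2) * A + (1 / 4) * (P - 1) * B := by linarith [h1]
    have h3 := mul_le_mul_of_nonneg_left hDlow hXpos.le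
    have hXX : X * ((1 - X⁻¹) * D) = (X - 1) * D := by field_simp
    rw [hXX] at h3
    have hPPB : P * P⁻¹ * B = B := by rw [mul_inv_cancel₀ hPne, one_mul]
    have key : (15 / 32) * (X - 16) * A ≤ (1 / 4) * (1 - P⁻¹) * (P - X) * B := by
      linarith [h3, hDup, hPPB]
    -- conclude
    rcases eq_or_lt_of_le hB0 with hB | hB
    · rw [← hB, div_zero]
      have hPinvle : P⁻¹ ≤ 1 := inv_le_one_of_one_le₀ (by linarith)
      apply div_nonneg
      · apply mul_nonneg (mul_nonneg (by norm_num) (by linarith))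
        linarith
      · linarith
    · rw [div_le_div_iff₀ hB (by linarith : (0 : ℝ) < X - 16)]
      linarith [key]
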